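/- Subsequence criterion for convergence in capacity: assume $V$ is continuous from above. Then $X_n \to X$ in capacity (i.e., $V(\{|X_n - X| \ge \varepsilon\}) \to 0$ for every $\varepsilon > 0$) if and only if every subsequence of $(X_n)$ has a further subsequence converging to $X$ quasi-surely (i.e., outside a set of capacity zero). -/

import Mathlib

open MeasureTheory Filter Set Topology ENNReal

/-- The upper capacity associated to a family of probability measures. -/
noncomputable def upperCap {Ω : Type*} [MeasurableSpace Ω]
    (Ps : Set (Measure Ω)) (A : Set Ω) : ℝ≥0∞ :=
  ⨆ P ∈ Ps, P A

lemma upperCap_mono {Ω : Type*} [MeasurableSpace Ω] (Ps : Set (Measure Ω))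
    {A B : Set Ω} (h : A ⊆ B) : upperCap Ps A ≤ upperCap Ps B := by
  refine iSup₂_le fun P hP => ?_
  exact le_trans (measure_mono h) (le_iSup₂ (f := fun P (_ : P ∈ Ps) => P B) P hP)

lemma upperCap_iUnion_le {Ω : Type*} [MeasurableSpace Ω] (Ps : Set (Measure Ω))
    (A : ℕ → Set Ω) : upperCap Ps (⋃ n, A n) ≤ ∑' n, upperCap Ps (A n) := by
  refine iSup₂_le fun P hP => ?_
  refine le_trans (measure_iUnion_le A) (ENNReal.tsum_le_tsum fun n => ?_)
  exact le_iSup₂ (f := fun P (_ : P ∈ Ps) => P (A n)) P hP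

theorem capacity_convergence_iff_subsequence_quasi_sure {Ω : Type*} [MeasurableSpace Ω]
    (Ps : Set (Measure Ω)) (hne : Ps.Nonempty)
    (hprob : ∀ P ∈ Ps, IsProbabilityMeasure P)
    (hV : ∀ B : ℕ → Set Ω, (∀ n, MeasurableSet (B n)) → Antitone B →
      Tendsto (fun n => upperCap Ps (B n)) atTop (𝓝 (upperCap Ps (⋂ n, B n))))
    (X : Ω → ℝ) (Xn : ℕ → Ω → ℝ) (hX : Measurable X) (hXn : ∀ n, Measurable (Xn n)) :
    (∀ ε > (0 : ℝ),
        Tendsto (fun n => upperCap Ps {ω | ε ≤ |Xn n ω - X ω|}) atTop (𝓝 0)) ↔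
      (∀ φ : ℕ → ℕ, StrictMono φ →
        ∃ ψ : ℕ → ℕ, StrictMono ψ ∧
          ∃ N : Set Ω, upperCap Ps N = 0 ∧
            ∀ ω ∉ N, Tendsto (fun k => Xn (φ (ψ k)) ω) atTop (𝓝 (X ω))) := by
  constructor
  · -- forward: convergence in capacity → subsequence criterion
    intro h φ hφ
    -- for each k pick a threshold M k beyond which capacity is small
    have key : ∀ k : ℕ, ∃ M : ℕ, ∀ n ≥ M,
        upperCap Ps {ω | (1/2 : ℝ)^k ≤ |Xn (φ n) ω - X ω|} ≤ (2 : ℝ≥0∞)⁻¹ ^ k := by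
      intro k
      have hεpos : (0:ℝ) < (1/2 : ℝ)^k := by positivity
      have ht : Tendsto (fun n => upperCap Ps {ω | (1/2 : ℝ)^k ≤ |Xn (φ n) ω - X ω|})
          atTop (𝓝 0) := (h _ hεpos).comp hφ.tendsto_atTop
      have hpos : (0:ℝ≥0∞) < (2 : ℝ≥0∞)⁻¹ ^ k :=
        ENNReal.pow_pos (ENNReal.inv_pos.mpr ENNReal.ofNat_ne_top) k
      have := ht.eventually_lt_const hpos
      rcases eventually_atTop.mp this with ⟨M, hM⟩
      exact ⟨M, fun n hn => (hM n hn).le⟩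
    choose M hM using key
    -- build strictly monotone ψ with ψ k ≥ M k
    set ψ : ℕ → ℕ := fun k => Nat.rec (M 0) (fun k ih => max (M (k+1)) (ih + 1)) k with hψdef
    have hψsucc : ∀ k, ψ k < ψ (k+1) := fun k =>
      lt_of_lt_of_le (Nat.lt_succ_self _) (le_max_right _ _)
    have hψmono : StrictMono ψ := strictMono_nat_of_lt_succ hψsucc
    have hψge : ∀ k, M k ≤ ψ k := by
      intro k; cases k with
      | zero => exact le_rfl
      | succ k => exact le_max_left _ _
    set A : ℕ → Set Ω := fun k => {ω | (1/2 : ℝ)^k ≤ |Xn (φ (ψ k)) ω - X ω|} with hA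
    have hAcap : ∀ k, upperCap Ps (A k) ≤ (2 : ℝ≥0∞)⁻¹ ^ k := fun k =>
      hM k (ψ k) (hψge k)
    refine ⟨ψ, hψmono, ⋂ m, ⋃ k, A (k + m), ?_, ?_⟩
    · -- capacity of limsup set is 0
      have hle : ∀ m, upperCap Ps (⋂ m, ⋃ k, A (k + m)) ≤ ∑' k, (2:ℝ≥0∞)⁻¹ ^ (k + m) := by
        intro m
        refine le_trans (upperCap_mono Ps (iInter_subset _ m)) ?_
        refine le_trans (upperCap_iUnion_le Ps _) (ENNReal.tsum_le_tsum fun k => ?_)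
        exact hAcap (k + m)
      have hsum : ∑' k, (2:ℝ≥0∞)⁻¹ ^ k ≠ ∞ := by
        rw [ENNReal.tsum_geometric, ENNReal.one_sub_inv_two, inv_inv]
        exact ENNReal.ofNat_ne_top
      have htail : Tendsto (fun m => ∑' k, (2:ℝ≥0∞)⁻¹ ^ (k + m)) atTop (𝓝 0) :=
        ENNReal.tendsto_sum_nat_add _ hsum
      have : upperCap Ps (⋂ m, ⋃ k, A (k + m)) ≤ 0 := ge_of_tendsto' htail hle
      exact le_antisymm this zero_le
    · -- convergence outside N
      intro ω hω
      simp only [mem_iInter, not_forall] at hω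
      obtain ⟨m, hm⟩ := hω
      have hsmall : ∀ k, |Xn (φ (ψ (k + m))) ω - X ω| < (1/2 : ℝ)^(k + m) := by
        intro k
        by_contra hc
        push_neg at hc
        exact hm (mem_iUnion.mpr ⟨k, hc⟩)
      rw [Metric.tendsto_atTop]
      intro ε hε
      obtain ⟨K, hK⟩ := exists_pow_lt_of_lt_one hε (by norm_num : (1/2:ℝ) < 1)
      refine ⟨K + m, fun k hk => ?_⟩
      have hk' : ∃ j, k = j + m := ⟨k - m, by omega⟩
      obtain ⟨j, rfl⟩ := hk'
      have h1 : |Xn (φ (ψ (j + m))) ω - X ω| < (1/2:ℝ)^(j+m) := hsmall j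
      have h2 : (1/2:ℝ)^(j+m) ≤ (1/2:ℝ)^K :=
        pow_le_pow_of_le_one (by norm_num) (by norm_num) (by omega)
      calc dist (Xn (φ (ψ (j+m))) ω) (X ω) = |Xn (φ (ψ (j+m))) ω - X ω| := rfl
        _ < (1/2:ℝ)^(j+m) := h1
        _ ≤ (1/2:ℝ)^K := h2
        _ < ε := hK
  · -- reverse direction
    intro h ε hε
    by_contra hcon
    rw [ENNReal.tendsto_atTop_zero] at hcon
    push_neg at hcon
    obtain ⟨δ, hδpos, hδ⟩ := hcon
    have hfreq : ∃ᶠ n in atTop, δ < upperCap Ps {ω | ε ≤ |Xn n ω - X ω|} := by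
      rw [frequently_atTop]
      intro N
      obtain ⟨n, hn, hgt⟩ := hδ N
      exact ⟨n, hn, hgt⟩
    obtain ⟨φ, hφ, hφδ⟩ := extraction_of_frequently_atTop hfreq
    obtain ⟨ψ, hψ, N, hN0, hNconv⟩ := h φ hφ
    set C : ℕ → Set Ω := fun k => {ω | ε ≤ |Xn (φ (ψ k)) ω - X ω|} with hC
    have hCmeas : ∀ k, MeasurableSet (C k) :=
      fun k => measurableSet_le measurable_const (((hXn _).sub hX).abs)
    set B : ℕ → Set Ω := fun m => ⋃ k, ⋃ (_ : m ≤ k), C k with hB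
    have hBmeas : ∀ m, MeasurableSet (B m) :=
      fun m => MeasurableSet.iUnion fun k => MeasurableSet.iUnion fun _ => hCmeas k
    have hBanti : Antitone B := by
      intro a b hab
      refine iUnion₂_subset fun k hk => subset_iUnion₂ (s := fun k _ => C k) k (hab.trans hk)
    have hsub : (⋂ m, B m) ⊆ N := by
      intro ω hω
      by_contra hωN
      have hconv := hNconv ω hωN
      rw [Metric.tendsto_atTop] at hconv
      obtain ⟨K, hK⟩ := hconv ε hε
      have : ω ∈ B K := mem_iInter.mp hω K
      simp only [hB, mem_iUnion] at this
      obtain ⟨k, hk, hωk⟩ := this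
      have := hK k hk
      rw [Real.dist_eq] at this
      exact not_le.mpr this hωk
    have hlim := hV B hBmeas hBanti
    have hz : upperCap Ps (⋂ m, B m) = 0 :=
      le_antisymm (hN0 ▸ upperCap_mono Ps hsub) zero_le
    rw [hz] at hlim
    have hge : ∀ m, δ ≤ upperCap Ps (B m) := by
      intro m
      refine le_trans (hφδ (ψ m)).le (upperCap_mono Ps ?_)
      exact subset_iUnion₂ (s := fun k _ => C k) m le_rfl
    have : δ ≤ 0 := ge_of_tendsto' hlim hge
    exact absurd this (not_le.mpr hδpos)
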